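/- Let k ≥ 2 and let t = 2^{2k} − 2^k + 1 be the Kasami–Welch number. Then the number of equal-degree terms of φ_t(x,y) ∈ F_2[x,y] — that is, the number of integers m ≥ 1 such that the coefficient of x^m y^m in φ_t(x,y) is nonzero — is odd. -/

import Mathlib

open MvPolynomial

namespace KasamiAux

abbrev R2 := ZMod 2
abbrev L := LaurentPolynomial R2
open LaurentPolynomial

lemma Lchar : (1 : L) + 1 = 0 := by
  have h : (T 0 : L) = AddMonoidAlgebra.single (0:ℤ) (1:R2) := rfl
  rw [← T_zero, h, ← AddMonoidAlgebra.single_add]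
  norm_num
  rfl

lemma hTT (m n : ℤ) : (T m : L) * T n = T (m+n) := (T_add m n).symm

lemma divisor_eq : ((T 1 + T (-1)) * (T 1 + 1) * (T (-1) + 1) : L) = T 2 + T (-2) := by
  ring_nf
  simp only [hTT, T_pow]
  norm_num
  linear_combination (T (1:ℤ) + T (-1:ℤ) + 1 : L) * Lchar

lemma pow_four (f : Polynomial R2) : f ^ 4 = Polynomial.expand R2 4 f := by
  have h := Polynomial.map_iterateFrobenius_expand (R := R2) (p := 2) f 2
  rw [Subsingleton.elim (iterateFrobenius R2 2 2) (RingHom.id _), Polynomial.map_id] at h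
  norm_num at h
  exact h.symm

lemma key_coeff (t : ℕ) (ht4 : t % 4 = 1) (n : ℕ) (hn : n % 4 = 3) :
    ((Polynomial.X ^ 2 + Polynomial.X + 1 : Polynomial R2) ^ t).coeff n = 0 := by
  obtain ⟨u, hu⟩ : ∃ u, t = 4 * u + 1 := ⟨t / 4, by omega⟩
  set f : Polynomial R2 := Polynomial.X ^ 2 + Polynomial.X + 1 with hf
  set E : Polynomial R2 := Polynomial.expand R2 4 (f ^ u) with hE
  have hft : f ^ t = Polynomial.X ^ 2 * E + Polynomial.X * E + E := by
    rw [hu, pow_add, pow_mul', pow_four, pow_one, ← hE]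
    ring
  have hEc : ∀ m : ℕ, ¬ (4 ∣ m) → E.coeff m = 0 := by
    intro m hm
    rw [hE, Polynomial.coeff_expand (by norm_num)]
    simp [hm]
  obtain ⟨m, rfl⟩ : ∃ m, n = m + 3 := ⟨n - 3, by omega⟩
  have c1 : (Polynomial.X ^ 2 * E).coeff (m + 3) = E.coeff (m + 1) := by
    have := Polynomial.coeff_X_pow_mul E 2 (m + 1)
    rw [show m + 1 + 2 = m + 3 by omega] at this
    exact this
  have c2 : (Polynomial.X * E).coeff (m + 3) = E.coeff (m + 2) := by
    have := Polynomial.coeff_X_pow_mul E 1 (m + 2)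
    rw [show m + 2 + 1 = m + 3 by omega, pow_one] at this
    exact this
  rw [hft, Polynomial.coeff_add, Polynomial.coeff_add, c1, c2,
    hEc _ (by omega), hEc _ (by omega), hEc _ (by omega)]
  norm_num

lemma toLaurent_coeff (f : Polynomial R2) (n : ℕ) :
    (Polynomial.toLaurent f).coeff (n : ℤ) = f.coeff n := by
  induction f using Polynomial.induction_on' with
  | add p q hp hq => rw [map_add, AddMonoidAlgebra.coeff_add, Finsupp.add_apply, hp, hq, Polynomial.coeff_add]
  | monomial k a =>
    rw [Polynomial.toLaurent_C_mul_T,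
      ← single_eq_C_mul_T, AddMonoidAlgebra.coeff_single, Finsupp.single_apply, Polynomial.coeff_monomial]
    simp [Nat.cast_inj]

noncomputable def A : MvPolynomial (Fin 2) R2 →ₐ[R2] L :=
  aeval ![T 1, T (-1)]

lemma A_X0 : A (X 0) = T 1 := by
  rw [A, aeval_X]; rfl

lemma A_X1 : A (X 1) = T (-1) := by
  rw [A, aeval_X]; rfl

lemma A_monomial (s : Fin 2 →₀ ℕ) (c : R2) :
    A (monomial s c) = AddMonoidAlgebra.single ((s 0 : ℤ) - s 1) c := by
  rw [A, aeval_monomial, Finsupp.prod_fintype _ _ (fun i => pow_zero _), Fin.prod_univ_two]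
  simp only [Matrix.cons_val_zero, Matrix.cons_val_one, Matrix.head_cons, T_pow]
  rw [← T_add, single_eq_C_mul_T]
  congr 2
  ring

lemma A_coeff (q : MvPolynomial (Fin 2) R2) (d : ℤ) :
    (A q).coeff d = ∑ s ∈ q.support, if (s 0 : ℤ) - s 1 = d then q.coeff s else 0 := by
  conv_lhs => rw [q.as_sum, map_sum]
  rw [AddMonoidAlgebra.coeff_sum, Finset.sum_apply']
  refine Finset.sum_congr rfl fun s _ => ?_
  rw [A_monomial, AddMonoidAlgebra.coeff_single, Finsupp.single_apply]

lemma A_coeff_large (q : MvPolynomial (Fin 2) R2) (d : ℤ) (hd : (q.totalDegree : ℤ) < d) :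
    (A q).coeff d = 0 := by
  rw [A_coeff]
  refine Finset.sum_eq_zero fun s hs => ?_
  rw [if_neg]
  intro h
  have h1 := MvPolynomial.le_totalDegree hs
  rw [Finsupp.sum_fintype _ _ (fun i => rfl), Fin.sum_univ_two] at h1
  omega

lemma t_facts (k : ℕ) (hk : 2 ≤ k) (t : ℕ) (ht : t = 2 ^ (2 * k) - 2 ^ k + 1) :
    t % 4 = 1 ∧ 13 ≤ t := by
  have h4 : 4 ∣ 2 ^ k := by
    have : (2:ℕ) ^ 2 ∣ 2 ^ k := pow_dvd_pow 2 hk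
    simpa using this
  have h4' : 4 ≤ 2 ^ k := Nat.le_of_dvd (by positivity) h4
  obtain ⟨c, hc⟩ := h4
  have hsq : 2 ^ (2 * k) = 2 ^ k * 2 ^ k := by rw [two_mul, pow_add]
  have hge : 4 * 2 ^ k ≤ 2 ^ k * 2 ^ k := Nat.mul_le_mul_right _ h4'
  have hm : 2 ^ k * 2 ^ k = 4 * (c * 2 ^ k) := by rw [hc]; ring
  omega

noncomputable def e1 : MvPolynomial (Fin 2) R2 →ₐ[R2] Polynomial R2 :=
  aeval ![Polynomial.X, 0]

lemma constant_coeff_phi (t : ℕ) (ht4 : t % 4 = 1) (ht13 : 13 ≤ t)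
    (phi : MvPolynomial (Fin 2) (ZMod 2))
    (hphi : phi * ((X 0 + X 1) * (X 0 + 1) * (X 1 + 1)) =
      X 0 ^ t + X 1 ^ t + 1 + (X 0 + X 1 + 1) ^ t) :
    MvPolynomial.coeff 0 phi = 1 := by
  have h := congrArg e1 hphi
  simp only [map_mul, map_add, map_pow, map_one, e1, aeval_X,
    Matrix.cons_val_zero, Matrix.cons_val_one, Matrix.head_cons,
    add_zero, zero_add] at h
  rw [zero_pow (by omega : t ≠ 0), add_zero] at h
  have hc := congrArg (fun p => Polynomial.coeff p 1) h
  set q : Polynomial R2 := (aeval ![Polynomial.X, 0]) phi with hq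
  rw [show q * (Polynomial.X * (Polynomial.X + 1) * 1)
      = q * Polynomial.X ^ 2 + q * Polynomial.X ^ 1 from by ring] at hc
  rw [Polynomial.coeff_add, Polynomial.coeff_mul_X_pow', Polynomial.coeff_mul_X_pow',
    Polynomial.coeff_add, Polynomial.coeff_add, Polynomial.coeff_X_pow,
    Polynomial.coeff_one, Polynomial.coeff_X_add_one_pow] at hc
  norm_num [show ¬ (1 = t) from by omega] at hc
  have hodd : ((t : ℕ) : R2) = 1 := by
    obtain ⟨m, hm⟩ : ∃ m, t = 2 * m + 1 := ⟨t / 2, by omega⟩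
    rw [hm]
    push_cast
    rw [show ((2:R2)) = 0 from rfl]
    ring
  rw [hodd] at hc
  have hhom : (Polynomial.evalRingHom (0 : R2)).comp
      ((aeval (R := R2) ![Polynomial.X, (0 : Polynomial R2)]).toRingHom)
      = MvPolynomial.constantCoeff := by
    apply MvPolynomial.ringHom_ext
    · intro r
      simp
    · intro i
      fin_cases i <;> simp
  have h2 := congrArg (fun f : MvPolynomial (Fin 2) R2 →+* R2 => f phi) hhom
  simp only [RingHom.comp_apply] at h2
  rw [MvPolynomial.constantCoeff_eq] at h2
  rw [← h2]
  rw [show (Polynomial.evalRingHom (0:R2)) ((aeval ![Polynomial.X, 0]).toRingHom phi)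
      = q.eval 0 from rfl]
  rw [← Polynomial.coeff_zero_eq_eval_zero, hc]

end KasamiAux

open KasamiAux LaurentPolynomial

/-- For the Kasami–Welch number `t = 2^(2k) - 2^k + 1` (k ≥ 2), the number of
"equal-degree" terms `x^m y^m` (m ≥ 1) appearing with nonzero coefficient in
`φ_t(x,y) ∈ F_2[x,y]` is odd.  Here `φ_t(x,y)` is the (unique) quotient of
`x^t + y^t + 1 + (x+y+1)^t` by `(x+y)(x+1)(y+1)` in `F_2[x,y]`. -/
theorem kasami_phi_odd_ED_terms (k : ℕ) (hk : 2 ≤ k) (t : ℕ)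
    (ht : t = 2 ^ (2 * k) - 2 ^ k + 1)
    (phi : MvPolynomial (Fin 2) (ZMod 2))
    (hphi : phi * ((X 0 + X 1) * (X 0 + 1) * (X 1 + 1)) =
      X 0 ^ t + X 1 ^ t + 1 + (X 0 + X 1 + 1) ^ t) :
    Odd ((phi.support.filter (fun s => 1 ≤ s 0 ∧ s 0 = s 1)).card) := by
  obtain ⟨ht4, ht13⟩ := t_facts k hk t ht
  have hc0 : MvPolynomial.coeff 0 phi = 1 := constant_coeff_phi t ht4 ht13 phi hphi
  -- Laurent image of the defining identity
  have h := congrArg A hphi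
  simp only [map_mul, map_add, map_pow, map_one, A_X0, A_X1] at h
  rw [divisor_eq, T_pow, T_pow, mul_one, mul_neg_one] at h
  have hlast : ((T 1 + T (-1) + 1 : L)) ^ t
      = T (-(t:ℤ)) * Polynomial.toLaurent
          ((Polynomial.X ^ 2 + Polynomial.X + 1 : Polynomial R2) ^ t) := by
    have h1 : (T 1 + T (-1) + 1 : L) = T (-1) * (T 2 + T 1 + 1) := by
      rw [mul_add, mul_add, hTT, hTT, mul_one]
      norm_num
      ring
    rw [h1, mul_pow, T_pow, mul_neg_one]
    congr 1
    rw [map_pow]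
    congr 1
    simp [Polynomial.toLaurent_X, ← T_pow]
  rw [hlast] at h
  rw [mul_add] at h
  -- coefficient recursion
  have hstep : ∀ j : ℕ, (A phi).coeff ((4:ℤ)*j + 4) = (A phi).coeff ((4:ℤ)*j) := by
    intro j
    have hd := congrArg (fun f : L => f.coeff ((4:ℤ)*j + 2)) h
    rw [AddMonoidAlgebra.coeff_add, Finsupp.add_apply] at hd
    rw [show (T 2 : L) = AddMonoidAlgebra.single (2:ℤ) (1:R2) from rfl,
        show (T (-2) : L) = AddMonoidAlgebra.single (-2:ℤ) (1:R2) from rfl,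
        AddMonoidAlgebra.coeff_mul_single_apply, AddMonoidAlgebra.coeff_mul_single_apply] at hd
    rw [show ((4:ℤ)*j + 2 + -2) = 4*j from by ring,
        show ((4:ℤ)*j + 2 + -(-2)) = 4*j + 4 from by ring] at hd
    rw [AddMonoidAlgebra.coeff_add, AddMonoidAlgebra.coeff_add, AddMonoidAlgebra.coeff_add,
      Finsupp.add_apply, Finsupp.add_apply, Finsupp.add_apply] at hd
    rw [T_apply, T_apply, if_neg (by omega), if_neg (by omega)] at hd
    rw [show ((1:L)).coeff ((4:ℤ)*j+2) = 0 from by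
      rw [← T_zero, T_apply, if_neg (by omega)]] at hd
    rw [show (T (-(t:ℤ)) : L) = AddMonoidAlgebra.single (-(t:ℤ)) (1:R2) from rfl,
        AddMonoidAlgebra.coeff_single_mul_apply] at hd
    rw [show (-(-(t:ℤ)) + ((4:ℤ)*j + 2)) = ((t + 4*j + 2 : ℕ) : ℤ) from by push_cast; ring,
        toLaurent_coeff, key_coeff t ht4 _ (by omega)] at hd
    simp only [mul_one, mul_zero, add_zero, zero_add] at hd
    revert hd
    generalize (A phi).coeff ((4:ℤ)*j) = a
    generalize (A phi).coeff ((4:ℤ)*j + 4) = b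
    revert a b
    decide
  have hiter : ∀ j : ℕ, (A phi).coeff ((4:ℤ)*j) = (A phi).coeff 0 := by
    intro j
    induction j with
    | zero => norm_num
    | succ n ih =>
      push_cast
      rw [show ((4:ℤ)*((n:ℤ)+1)) = 4*(n:ℤ) + 4 from by ring]
      rw [hstep n, ih]
  have hzero : (A phi).coeff 0 = 0 := by
    have h1 : (A phi).coeff ((4:ℤ)*((phi.totalDegree + 1 : ℕ) : ℤ)) = 0 :=
      A_coeff_large phi _ (by push_cast; omega)
    exact (hiter (phi.totalDegree + 1)).symm.trans h1
  -- translate to the coefficient sum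
  have hsum := A_coeff phi 0
  rw [hzero] at hsum
  rw [← Finset.sum_filter] at hsum
  have hfe : phi.support.filter (fun s => (s 0 : ℤ) - s 1 = 0)
      = insert 0 (phi.support.filter (fun s => 1 ≤ s 0 ∧ s 0 = s 1)) := by
    ext s
    simp only [Finset.mem_filter, Finset.mem_insert]
    constructor
    · rintro ⟨hs, hcond⟩
      have heq : s 0 = s 1 := by omega
      rcases Nat.eq_zero_or_pos (s 0) with h0 | h0
      · left
        ext i
        fin_cases i
        · exact h0
        · show s 1 = (0 : Fin 2 →₀ ℕ) 1
          simp only [Finsupp.coe_zero, Pi.zero_apply]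
          omega
      · right; exact ⟨hs, h0, heq⟩
    · rintro (rfl | ⟨hs, h1, heq⟩)
      · refine ⟨?_, by simp⟩
        rw [MvPolynomial.mem_support_iff, hc0]
        norm_num
      · exact ⟨hs, by omega⟩
  rw [hfe, Finset.sum_insert (by simp)] at hsum
  rw [hc0] at hsum
  have hsum1 : (∑ s ∈ phi.support.filter (fun s => 1 ≤ s 0 ∧ s 0 = s 1),
      MvPolynomial.coeff s phi) = 1 := by
    revert hsum
    generalize (∑ s ∈ phi.support.filter (fun s => 1 ≤ s 0 ∧ s 0 = s 1),
      MvPolynomial.coeff s phi) = a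
    revert a
    decide
  have hones : (∑ s ∈ phi.support.filter (fun s => 1 ≤ s 0 ∧ s 0 = s 1),
      MvPolynomial.coeff s phi)
      = ((phi.support.filter (fun s => 1 ≤ s 0 ∧ s 0 = s 1)).card : R2) := by
    rw [Finset.card_eq_sum_ones, Nat.cast_sum]
    refine Finset.sum_congr rfl fun s hs => ?_
    simp only [Finset.mem_filter, MvPolynomial.mem_support_iff] at hs
    have := hs.1
    revert this
    generalize MvPolynomial.coeff s phi = a
    revert a
    decide
  rw [hones] at hsum1
  rw [Nat.odd_iff]
  by_contra hcon
  have heven : 2 ∣ (phi.support.filter (fun s => 1 ≤ s 0 ∧ s 0 = s 1)).card := by omega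
  rw [(ZMod.natCast_eq_zero_iff _ 2).2 heven] at hsum1
  exact absurd hsum1 (by decide)
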